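/- Let γ ∈ (0,1) and G ⊆ G_γ. Then for every ψ ∈ ℋ(G): for every g ∈ G the family (U(g−h)·ψ_h)_{h∈G} is summable, and Σ_{g∈G} ρ_g·|(π/ρ_g)·Σ_{h∈G} U(g−h)·ψ_h|² ≤ (π·C_U·𝔖₀(α_U)/(γ·ρ₀))²·‖ψ‖_G². -/

import Mathlib

noncomputable section

open scoped RealInnerProductSpace BigOperators
open Real

/-- `ℝ^d` with the Euclidean structure. -/
abbrev V (d : ℕ) : Type := EuclideanSpace ℝ (Fin d)

/-- `Λ` is a full-rank lattice: the set of integer linear combinations of some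
basis of `ℝ^d`. -/
def IsLattice {d : ℕ} (Λ : Set (V d)) : Prop :=
  ∃ b : Module.Basis (Fin d) ℝ (V d),
    Λ = {x : V d | ∃ c : Fin d → ℤ, x = ∑ i, (c i : ℝ) • b i}

/-- The vector `ν = (0,…,0,1)`. -/
def nu (d : ℕ) (hd : 0 < d) : V d :=
  EuclideanSpace.single ⟨d - 1, Nat.sub_lt hd Nat.one_pos⟩ (1 : ℝ)

/-- `ρ_g = (k₀+g)·ν`. -/
def rho {d : ℕ} (k₀ ν g : V d) : ℝ := ⟪k₀ + g, ν⟫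

/-- `σ_g = |k₀|² - |k₀+g|²`. -/
def sig {d : ℕ} (k₀ g : V d) : ℝ := ‖k₀‖ ^ 2 - ‖k₀ + g‖ ^ 2

/-- `G_γ = {g ∈ Λ : ρ_g ≥ γ·ρ₀}`. -/
def Gset {d : ℕ} (Λ : Set (V d)) (k₀ ν : V d) (γ : ℝ) : Set (V d) :=
  {g ∈ Λ | γ * ⟪k₀, ν⟫ ≤ rho k₀ ν g}

/-- `G^M = {g ∈ Λ : |g| ≤ M}`. -/
def GMball {d : ℕ} (Λ : Set (V d)) (M : ℝ) : Set (V d) := {g ∈ Λ | ‖g‖ ≤ M}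

/-- `𝔖_m(β) = Σ_{κ∈Λ} |κ|^m·exp(-β·|κ|)`. -/
def Sm {d : ℕ} (Λ : Set (V d)) (m : ℕ) (β : ℝ) : ℝ :=
  ∑' κ : Λ, ‖(κ : V d)‖ ^ m * Real.exp (-β * ‖(κ : V d)‖)

/-- The norm `‖φ‖_G` of `ℋ(G)`. -/
def normOn {d : ℕ} (k₀ ν : V d) (G : Set (V d)) (φ : V d → ℂ) : ℝ :=
  Real.sqrt (∑' g : G, rho k₀ ν (g : V d) * ‖φ (g : V d)‖ ^ 2)

/-- The exponentially weighted norm `‖φ‖_α`. -/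
def normA {d : ℕ} (k₀ ν : V d) (G : Set (V d)) (α : ℝ) (φ : V d → ℂ) : ℝ :=
  Real.sqrt (∑' g : G,
    Real.exp (2 * α * ‖(g : V d)‖) * rho k₀ ν (g : V d) * ‖φ (g : V d)‖ ^ 2)

/-- `φ|_G` is a member of `ℋ(G)`, i.e. `‖φ‖_G² < ∞`. -/
def MemH {d : ℕ} (k₀ ν : V d) (G : Set (V d)) (φ : V d → ℂ) : Prop :=
  Summable fun g : G => rho k₀ ν (g : V d) * ‖φ (g : V d)‖ ^ 2

/-- The DHW equations on the beam set `G`: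
`(ρ_g/π)·ψ_g′(z) = i(σ_g ψ_g(z) + Σ_{h∈G} U(g-h) ψ_h(z))` for `g ∈ G`,
including summability of the interaction sum. -/
def SatDHW {d : ℕ} (k₀ ν : V d) (U : V d → ℂ) (G : Set (V d)) (ψ : ℝ → V d → ℂ) : Prop :=
  ∀ z : ℝ, ∀ g ∈ G,
    Summable (fun h : G => U (g - (h : V d)) * ψ z (h : V d)) ∧
    HasDerivAt (fun w => ψ w g)
      (((π / rho k₀ ν g : ℝ) : ℂ) * (Complex.I *
        (((sig k₀ g : ℝ) : ℂ) * ψ z g +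
          ∑' h : G, U (g - (h : V d)) * ψ z (h : V d)))) z

/-- `z ↦ (w(g)·ψ_g(z))_{g∈G}` is a differentiable curve in `ℋ(G)`, encoded by
the weighted embedding `g ↦ w(g)·√ρ_g·ψ_g(z)` into `ℓ²(G)`. -/
def CurveDiff {d : ℕ} (k₀ ν : V d) (G : Set (V d)) (w : V d → ℝ) (ψ : ℝ → V d → ℂ) : Prop :=
  ∃ A : ℝ → lp (fun _ : G => ℂ) 2, Differentiable ℝ A ∧
    ∀ (z : ℝ) (g : G),
      A z g = ((w (g : V d) * Real.sqrt (rho k₀ ν (g : V d)) : ℝ) : ℂ) * ψ z (g : V d)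

/-- Tame strong solution of `DHW_G`. -/
def IsTameSol {d : ℕ} (k₀ ν : V d) (U : V d → ℂ) (G : Set (V d)) (ψ : ℝ → V d → ℂ) : Prop :=
  SatDHW k₀ ν U G ψ ∧ CurveDiff k₀ ν G (fun _ => 1) ψ ∧
  ∀ z : ℝ,
    Summable (fun g : G => |sig k₀ (g : V d)| * ‖ψ z (g : V d)‖ ^ 2) ∧
    Summable (fun q : G × G =>
      ‖U ((q.1 : V d) - (q.2 : V d))‖ * ‖ψ z (q.2 : V d)‖ * ‖ψ z (q.1 : V d)‖)

/-- `α`-tame strong solution of `DHW_G`. -/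
def IsAlphaTameSol {d : ℕ} (k₀ ν : V d) (U : V d → ℂ) (G : Set (V d)) (α : ℝ)
    (ψ : ℝ → V d → ℂ) : Prop :=
  SatDHW k₀ ν U G ψ ∧ CurveDiff k₀ ν G (fun _ => 1) ψ ∧
  CurveDiff k₀ ν G (fun g => Real.exp (α * ‖g‖)) ψ ∧
  ∀ z : ℝ,
    Summable (fun g : G =>
      Real.exp (2 * α * ‖(g : V d)‖) * |sig k₀ (g : V d)| * ‖ψ z (g : V d)‖ ^ 2) ∧
    Summable (fun q : G × G =>
      Real.exp (α * ‖(q.1 : V d)‖ + α * ‖(q.2 : V d)‖) *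
        ‖U ((q.1 : V d) - (q.2 : V d))‖ * ‖ψ z (q.2 : V d)‖ * ‖ψ z (q.1 : V d)‖)

open Classical in
/-- Initial condition `ψ(0) = δ` on `G`. -/
def InitDelta {d : ℕ} (G : Set (V d)) (ψ : ℝ → V d → ℂ) : Prop :=
  ∀ g ∈ G, ψ 0 g = if g = (0 : V d) then 1 else 0

section Aux

open MeasureTheory

private lemma tsum_mul_sq_le_ennreal {ι : Type*} (f g : ι → ENNReal) :
    (∑' i, f i * g i) ^ 2 ≤ (∑' i, f i ^ 2) * (∑' i, g i ^ 2) := by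
  letI : MeasurableSpace ι := ⊤
  haveI : MeasurableSingletonClass ι := ⟨fun _ => trivial⟩
  have hpq : Real.HolderConjugate 2 2 := Real.HolderConjugate.two_two
  have h := ENNReal.lintegral_mul_le_Lp_mul_Lq (Measure.count : Measure ι) hpq
    (f := f) (g := g) (Measurable.aemeasurable (fun _ _ => trivial))
    (Measurable.aemeasurable (fun _ _ => trivial))
  simp only [Pi.mul_apply, lintegral_count] at h
  have h2 := pow_le_pow_left' h 2
  refine h2.trans (le_of_eq ?_)
  rw [mul_pow, ← ENNReal.rpow_natCast (_ ^ (1/2:ℝ)), ← ENNReal.rpow_natCast (_ ^ (1/2:ℝ)),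
    ← ENNReal.rpow_mul, ← ENNReal.rpow_mul]
  norm_num

private lemma summable_exp_int' {δ : ℝ} (hδ : 0 < δ) :
    Summable (fun n : ℤ => Real.exp (-δ * |(n : ℝ)|)) := by
  apply Summable.of_nat_of_neg <;>
  · simpa [abs_of_nonneg, Nat.cast_nonneg, mul_comm] using
      (Real.summable_exp_nat_mul_iff.2 (neg_neg_iff_pos.2 hδ : -δ < 0))

private lemma summable_exp_pi' (d : ℕ) {δ : ℝ} (hδ : 0 < δ) :
    Summable (fun c : Fin d → ℤ => Real.exp (-δ * ∑ i, |(c i : ℝ)|)) := by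
  induction d with
  | zero => exact .of_finite
  | succ n ih =>
      have h1 := ((summable_exp_int' hδ).mul_of_nonneg ih
        (fun _ => (Real.exp_pos _).le) (fun _ => (Real.exp_pos _).le))
      have h2 : Summable ((fun c : Fin (n+1) → ℤ => Real.exp (-δ * ∑ i, |(c i : ℝ)|)) ∘
          (Fin.consEquiv (fun _ => ℤ))) := by
        convert h1 using 1
        funext p
        simp [Fin.sum_univ_succ, ← Real.exp_add, mul_add]
      exact ((Fin.consEquiv (fun _ => ℤ)).summable_iff).1 h2

private lemma lattice_sub' {d : ℕ} {Λ : Set (V d)} (hΛ : IsLattice Λ) {x y : V d}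
    (hx : x ∈ Λ) (hy : y ∈ Λ) : x - y ∈ Λ := by
  obtain ⟨b, rfl⟩ := hΛ
  obtain ⟨c, rfl⟩ := hx
  obtain ⟨c', rfl⟩ := hy
  exact ⟨c - c', by simp [sub_smul, Finset.sum_sub_distrib]⟩

private lemma summable_exp_lattice' {d : ℕ} {Λ : Set (V d)} (hΛ : IsLattice Λ) {β : ℝ}
    (hβ : 0 < β) : Summable (fun κ : Λ => Real.exp (-β * ‖(κ : V d)‖)) := by
  rcases Nat.eq_zero_or_pos d with hd | hd
  · subst hd
    have : Finite (V 0) := Finite.of_fintype _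
    exact .of_finite
  obtain ⟨b, hb⟩ := hΛ
  set f : (Fin d → ℤ) → V d := fun c => ∑ i, (c i : ℝ) • b i with hf
  have hmem : ∀ c, f c ∈ Λ := fun c => hb ▸ ⟨c, rfl⟩
  have e1 : ∀ a : Fin d → ℤ, ⇑(b.repr (f a)) = fun i => (a i : ℝ) := by
    intro a; rw [hf]; exact b.repr_sum_self _
  have hinj : Function.Injective f := by
    intro c c' h
    have h2 : (fun i => ((c i : ℝ))) = fun i => (c' i : ℝ) := by
      rw [← e1 c, ← e1 c', h]
    funext i
    have := congrFun h2 i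
    exact_mod_cast this
  have hsurj : ∀ κ : Λ, ∃ c, f c = (κ : V d) := by
    intro ⟨κ, hκ⟩
    rw [hb] at hκ
    obtain ⟨c, hc⟩ := hκ
    exact ⟨c, hc.symm⟩
  let e : (Fin d → ℤ) ≃ Λ := Equiv.ofBijective (fun c => ⟨f c, hmem c⟩)
    ⟨fun c c' h => hinj (congrArg Subtype.val h), fun κ => by
      obtain ⟨c, hc⟩ := hsurj κ; exact ⟨c, Subtype.ext hc⟩⟩
  rw [← e.summable_iff]
  let T : V d →L[ℝ] (Fin d → ℝ) := LinearMap.toContinuousLinearMap b.equivFun.toLinearMap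
  set C : ℝ := ‖T‖ + 1 with hC
  have hC0 : 0 < C := by positivity
  have key : ∀ c : Fin d → ℤ, (∑ i, |(c i : ℝ)|) ≤ (C * d) * ‖f c‖ := by
    intro c
    have h1 : ‖T (f c)‖ ≤ C * ‖f c‖ := by
      calc ‖T (f c)‖ ≤ ‖T‖ * ‖f c‖ := T.le_opNorm _
      _ ≤ C * ‖f c‖ := by apply mul_le_mul_of_nonneg_right (by simp [hC]) (norm_nonneg _)
    have hTf : T (f c) = fun i => (c i : ℝ) := by
      show b.equivFun (f c) = _
      funext i
      rw [Module.Basis.equivFun_apply]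
      exact congrFun (e1 c) i
    calc (∑ i, |(c i : ℝ)|) ≤ ∑ _i : Fin d, ‖T (f c)‖ := by
          apply Finset.sum_le_sum
          intro i _
          have := norm_le_pi_norm (fun j => ((c j : ℝ))) i
          simpa [hTf] using this
      _ = d * ‖T (f c)‖ := by simp [mul_comm]
      _ ≤ d * (C * ‖f c‖) := by
          apply mul_le_mul_of_nonneg_left h1 (by positivity)
      _ = (C * d) * ‖f c‖ := by ring
  have hδ : 0 < β / (C * d) := by positivity
  apply Summable.of_nonneg_of_le (fun c => (Real.exp_pos _).le) _ (summable_exp_pi' d hδ)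
  intro c
  show Real.exp (-β * ‖f c‖) ≤ _
  apply Real.exp_le_exp.2
  rw [neg_mul, neg_mul, neg_le_neg_iff]
  rw [div_mul_eq_mul_div, div_le_iff₀ (by positivity)]
  calc β * ∑ i, |(c i : ℝ)| ≤ β * ((C * d) * ‖f c‖) :=
        mul_le_mul_of_nonneg_left (key c) hβ.le
    _ = β * ‖f c‖ * (C * d) := by ring

private lemma schur_ennreal {ι : Type*} (K : ι → ι → ENNReal) (c : ι → ENNReal) (S : ENNReal)
    (hrow : ∀ g, (∑' h, K g h) ≤ S) (hcol : ∀ h, (∑' g, K g h) ≤ S) :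
    (∑' g, (∑' h, K g h * c h) ^ 2) ≤ S ^ 2 * ∑' h, c h ^ 2 := by
  have key : ∀ x : ENNReal, (x ^ (1/2:ℝ)) ^ 2 = x := fun x => by
    rw [← ENNReal.rpow_natCast (x ^ (1/2:ℝ)), ← ENNReal.rpow_mul]; norm_num
  have cs : ∀ g, (∑' h, K g h * c h) ^ 2 ≤ (∑' h, K g h) * (∑' h, K g h * c h ^ 2) := by
    intro g
    calc (∑' h, K g h * c h)^2
        = (∑' h, (K g h)^(1/2:ℝ) * ((K g h)^(1/2:ℝ) * c h))^2 := by
          congr 1; apply tsum_congr; intro h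
          rw [← mul_assoc, ← sq, key]
      _ ≤ (∑' h, ((K g h)^(1/2:ℝ))^2) * (∑' h, ((K g h)^(1/2:ℝ) * c h)^2) :=
          tsum_mul_sq_le_ennreal _ _
      _ = (∑' h, K g h) * (∑' h, K g h * c h ^ 2) := by
          congr 1
          · apply tsum_congr; intro h; rw [key]
          · apply tsum_congr; intro h; rw [mul_pow, key]
  calc (∑' g, (∑' h, K g h * c h)^2)
      ≤ ∑' g, S * (∑' h, K g h * c h ^ 2) :=
        Summable.tsum_le_tsum (fun g => (cs g).trans (mul_le_mul_left (hrow g) _))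
          ENNReal.summable ENNReal.summable
    _ = S * ∑' h, (∑' g, K g h) * c h ^ 2 := by
        rw [ENNReal.tsum_mul_left]
        congr 1
        rw [ENNReal.tsum_comm]
        apply tsum_congr; intro h
        rw [ENNReal.tsum_mul_right]
    _ ≤ S * ∑' h, S * c h ^ 2 := by
        refine mul_le_mul' le_rfl (Summable.tsum_le_tsum (fun h => mul_le_mul_left (hcol h) _)
          ENNReal.summable ENNReal.summable)
    _ = S ^ 2 * ∑' h, c h ^ 2 := by rw [ENNReal.tsum_mul_left, ← mul_assoc, sq]

end Aux

/-- bound on the scattering operator `R⁻¹𝕌` on `ℋ(G)`: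
for `G ⊆ G_γ` and `ψ ∈ ℋ(G)`, the convolution sums are well defined and
`Σ_g ρ_g·|(π/ρ_g)·Σ_h U(g-h)ψ_h|² ≤ (π·C_U·𝔖₀(α_U)/(γ·ρ₀))²·‖ψ‖_G²`. -/

theorem stmt16 {d : ℕ} (hd : 0 < d) (Λ : Set (V d)) (hΛ : IsLattice Λ)
    (k₀ : V d) (hk : 0 < ⟪k₀, nu d hd⟫)
    (U : V d → ℂ)
    (CU αU : ℝ) (hCU : 0 < CU) (hαU : 0 < αU)
    (hUbd : ∀ g ∈ Λ, ‖U g‖ ≤ CU * Real.exp (-αU * ‖g‖))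
    (γ : ℝ) (hγ : γ ∈ Set.Ioo (0 : ℝ) 1)
    (G : Set (V d)) (hG : G ⊆ Gset Λ k₀ (nu d hd) γ) :
    ∀ ψ : V d → ℂ,
      (Summable fun g : G => rho k₀ (nu d hd) (g : V d) * ‖ψ (g : V d)‖ ^ 2) →
      (∀ g : G, Summable fun h : G => U ((g : V d) - (h : V d)) * ψ (h : V d)) ∧
      (∑' g : G, rho k₀ (nu d hd) (g : V d) *
          ‖((π / rho k₀ (nu d hd) (g : V d) : ℝ) : ℂ) *
            ∑' h : G, U ((g : V d) - (h : V d)) * ψ (h : V d)‖ ^ 2) ≤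
        (π * CU * Sm Λ 0 αU / (γ * ⟪k₀, nu d hd⟫)) ^ 2 *
          ∑' g : G, rho k₀ (nu d hd) (g : V d) * ‖ψ (g : V d)‖ ^ 2 := by
  intro ψ hψ
  have hγρ : 0 < γ * ⟪k₀, nu d hd⟫ := mul_pos hγ.1 hk
  have hmemΛ : ∀ g : G, (g : V d) ∈ Λ := fun g => (hG g.2).1
  have hρge : ∀ g : G, γ * ⟪k₀, nu d hd⟫ ≤ rho k₀ (nu d hd) (g : V d) := fun g => (hG g.2).2
  have hρpos : ∀ g : G, 0 < rho k₀ (nu d hd) (g : V d) := fun g => lt_of_lt_of_le hγρ (hρge g)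
  have hsub : ∀ g h : G, (g : V d) - (h : V d) ∈ Λ :=
    fun g h => lattice_sub' hΛ (hmemΛ g) (hmemΛ h)
  set E : V d → ℝ := fun κ => Real.exp (-αU * ‖κ‖) with hE
  have hEpos : ∀ κ, 0 < E κ := fun κ => Real.exp_pos _
  have hEle1 : ∀ κ, E κ ≤ 1 := fun κ => Real.exp_le_one_iff.2 (by
    have : 0 ≤ αU * ‖κ‖ := by positivity
    linarith)
  have hSsum : Summable (fun κ : Λ => E (κ : V d)) := summable_exp_lattice' hΛ hαU
  have hEsum : ∀ g : G, Summable (fun h : G => E ((g : V d) - (h : V d))) := by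
    intro g
    have hinj : Function.Injective (fun h : G => (⟨(g : V d) - h, hsub g h⟩ : Λ)) := by
      intro h h' hh
      have h1 : (g : V d) - h = (g : V d) - h' := congrArg Subtype.val hh
      exact Subtype.ext (sub_right_inj.1 h1)
    have h2 := hSsum.comp_injective hinj
    exact h2
  have hb2 : ∀ h : G, ‖ψ (h : V d)‖ ^ 2 ≤
      (γ * ⟪k₀, nu d hd⟫)⁻¹ * (rho k₀ (nu d hd) (h : V d) * ‖ψ (h : V d)‖ ^ 2) := by
    intro h
    have h1 : γ * ⟪k₀, nu d hd⟫ * ‖ψ (h : V d)‖ ^ 2 ≤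
        rho k₀ (nu d hd) (h : V d) * ‖ψ (h : V d)‖ ^ 2 :=
      mul_le_mul_of_nonneg_right (hρge h) (sq_nonneg _)
    calc ‖ψ (h : V d)‖ ^ 2
        = (γ * ⟪k₀, nu d hd⟫)⁻¹ * (γ * ⟪k₀, nu d hd⟫ * ‖ψ (h : V d)‖ ^ 2) :=
          (inv_mul_cancel_left₀ hγρ.ne' _).symm
      _ ≤ _ := mul_le_mul_of_nonneg_left h1 (inv_nonneg.2 hγρ.le)
  have hψ2 : Summable (fun h : G => ‖ψ (h : V d)‖ ^ 2) :=
    Summable.of_nonneg_of_le (fun h => sq_nonneg _) hb2 (hψ.mul_left _)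
  have hEψ : ∀ g : G, Summable (fun h : G => E ((g : V d) - h) * ‖ψ (h : V d)‖) := by
    intro g
    have h1 : Summable (fun h : G => E ((g : V d) - h) * ‖ψ (h : V d)‖ ^ 2) :=
      Summable.of_nonneg_of_le (fun h => mul_nonneg (hEpos _).le (sq_nonneg _))
        (fun h => mul_le_of_le_one_left (sq_nonneg _) (hEle1 _)) hψ2
    apply Summable.of_nonneg_of_le (fun h => mul_nonneg (hEpos _).le (norm_nonneg _)) _
      (((hEsum g).add h1).mul_left (1/2))
    intro h
    have h2 := hEpos ((g : V d) - h)
    nlinarith [sq_nonneg (‖ψ (h : V d)‖ - 1)]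
  have hUn : ∀ g : G, ∀ h : G, ‖U ((g : V d) - (h : V d)) * ψ (h : V d)‖ ≤
      CU * (E ((g : V d) - h) * ‖ψ (h : V d)‖) := by
    intro g h
    rw [norm_mul]
    calc ‖U ((g : V d) - h)‖ * ‖ψ (h : V d)‖
        ≤ (CU * E ((g : V d) - h)) * ‖ψ (h : V d)‖ :=
          mul_le_mul_of_nonneg_right (hUbd _ (hsub g h)) (norm_nonneg _)
      _ = CU * (E ((g : V d) - h) * ‖ψ (h : V d)‖) := by ring
  have hUψ : ∀ g : G, Summable (fun h : G => U ((g : V d) - (h : V d)) * ψ (h : V d)) :=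
    fun g => Summable.of_norm_bounded ((hEψ g).mul_left CU) (hUn g)
  refine ⟨hUψ, ?_⟩
  -- real setup
  set ρ : G → ℝ := fun g => rho k₀ (nu d hd) (g : V d) with hρdef
  set F : G → ℝ := fun g => ρ g * ‖((π / ρ g : ℝ) : ℂ) *
    ∑' h : G, U ((g : V d) - (h : V d)) * ψ (h : V d)‖ ^ 2 with hFdef
  set N : ℝ := ∑' g : G, ρ g * ‖ψ (g : V d)‖ ^ 2 with hNdef
  have hN0 : 0 ≤ N := tsum_nonneg (fun g => mul_nonneg (hρpos g).le (sq_nonneg _))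
  set Sreal : ℝ := ∑' κ : Λ, E (κ : V d) with hSdef
  have hS0 : 0 ≤ Sreal := tsum_nonneg (fun κ => (hEpos _).le)
  have hSm : Sm Λ 0 αU = Sreal := by
    simp only [Sm, pow_zero, one_mul, hSdef, hE]
  have hUnorm : ∀ g : G, Summable (fun h : G => ‖U ((g : V d) - (h : V d)) * ψ (h : V d)‖) :=
    fun g => Summable.of_nonneg_of_le (fun h => norm_nonneg _) (hUn g) ((hEψ g).mul_left CU)
  have hTb : ∀ g : G, ‖∑' h : G, U ((g : V d) - (h : V d)) * ψ (h : V d)‖ ≤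
      ∑' h : G, CU * (E ((g : V d) - h) * ‖ψ (h : V d)‖) := by
    intro g
    calc ‖∑' h : G, U ((g : V d) - (h : V d)) * ψ (h : V d)‖
        ≤ ∑' h : G, ‖U ((g : V d) - (h : V d)) * ψ (h : V d)‖ :=
          norm_tsum_le_tsum_norm (hUnorm g)
      _ ≤ _ := Summable.tsum_le_tsum (hUn g) (hUnorm g) ((hEψ g).mul_left CU)
  have hFb : ∀ g : G, F g ≤ π ^ 2 / (γ * ⟪k₀, nu d hd⟫) *
      (∑' h : G, CU * (E ((g : V d) - h) * ‖ψ (h : V d)‖)) ^ 2 := by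
    intro g
    have hfg : F g = π ^ 2 / ρ g *
        ‖∑' h : G, U ((g : V d) - (h : V d)) * ψ (h : V d)‖ ^ 2 := by
      have hρg := hρpos g
      simp only [hFdef]
      rw [norm_mul, Complex.norm_real, Real.norm_eq_abs,
        abs_of_pos (div_pos Real.pi_pos hρg)]
      field_simp
      rw [hρdef]
      field_simp
    rw [hfg]
    have h1 : π ^ 2 / ρ g ≤ π ^ 2 / (γ * ⟪k₀, nu d hd⟫) :=
      div_le_div_of_nonneg_left (sq_nonneg π) hγρ (hρge g)
    have h2 : ‖∑' h : G, U ((g : V d) - (h : V d)) * ψ (h : V d)‖ ^ 2 ≤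
        (∑' h : G, CU * (E ((g : V d) - h) * ‖ψ (h : V d)‖)) ^ 2 :=
      pow_le_pow_left₀ (norm_nonneg _) (hTb g) 2
    exact mul_le_mul h1 h2 (sq_nonneg _) (div_nonneg (sq_nonneg _) hγρ.le)
  -- ENNReal setup
  set EE : V d → ENNReal := fun κ => ENNReal.ofReal (E κ) with hEE
  set cc : G → ENNReal := fun h => ENNReal.ofReal ‖ψ (h : V d)‖ with hcc
  set K : G → G → ENNReal := fun g h => EE ((g : V d) - (h : V d)) with hK
  set SS : ENNReal := ENNReal.ofReal Sreal with hSS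
  have hStsum : SS = ∑' κ : Λ, EE (κ : V d) := by
    rw [hSS, hSdef, ENNReal.ofReal_tsum_of_nonneg (fun κ => (hEpos _).le) hSsum]
  have hrow : ∀ g : G, (∑' h : G, K g h) ≤ SS := by
    intro g
    rw [hStsum]
    have hinj : Function.Injective (fun h : G => (⟨(g : V d) - h, hsub g h⟩ : Λ)) := by
      intro h h' hh
      have h1 : (g : V d) - h = (g : V d) - h' := congrArg Subtype.val hh
      exact Subtype.ext (sub_right_inj.1 h1)
    simpa [Function.comp] using ENNReal.tsum_comp_le_tsum_of_injective hinj (fun κ : Λ => EE (κ : V d))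
  have hcol : ∀ h : G, (∑' g : G, K g h) ≤ SS := by
    intro h
    rw [hStsum]
    have hinj : Function.Injective (fun g : G => (⟨(g : V d) - h, hsub g h⟩ : Λ)) := by
      intro g g' hh
      have h1 : (g : V d) - h = (g' : V d) - h := congrArg Subtype.val hh
      exact Subtype.ext (sub_left_inj.1 h1)
    simpa [Function.comp] using ENNReal.tsum_comp_le_tsum_of_injective hinj (fun κ : Λ => EE (κ : V d))
  have hschur := schur_ennreal K cc SS hrow hcol
  have hofF : ∀ g : G, ENNReal.ofReal (F g) ≤
      ENNReal.ofReal (π ^ 2 / (γ * ⟪k₀, nu d hd⟫)) * ((ENNReal.ofReal CU) ^ 2 *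
        (∑' h : G, K g h * cc h) ^ 2) := by
    intro g
    refine (ENNReal.ofReal_le_ofReal (hFb g)).trans ?_
    rw [ENNReal.ofReal_mul (div_nonneg (sq_nonneg _) hγρ.le)]
    refine mul_le_mul' le_rfl ?_
    have h3 : ENNReal.ofReal (∑' h : G, CU * (E ((g : V d) - h) * ‖ψ (h : V d)‖)) =
        ENNReal.ofReal CU * ∑' h : G, K g h * cc h := by
      rw [ENNReal.ofReal_tsum_of_nonneg
        (fun h => mul_nonneg hCU.le (mul_nonneg (hEpos _).le (norm_nonneg _)))
        ((hEψ g).mul_left CU)]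
      rw [← ENNReal.tsum_mul_left]
      apply tsum_congr
      intro h
      rw [ENNReal.ofReal_mul hCU.le, ENNReal.ofReal_mul (hEpos _).le]
    rw [ENNReal.ofReal_pow (tsum_nonneg
      (fun h => mul_nonneg hCU.le (mul_nonneg (hEpos _).le (norm_nonneg _)))), h3, mul_pow]
  have hc2 : (∑' h : G, cc h ^ 2) ≤
      ENNReal.ofReal (γ * ⟪k₀, nu d hd⟫)⁻¹ * ENNReal.ofReal N := by
    have hle : ∀ h : G, cc h ^ 2 ≤ ENNReal.ofReal (γ * ⟪k₀, nu d hd⟫)⁻¹ *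
        ENNReal.ofReal (ρ h * ‖ψ (h : V d)‖ ^ 2) := by
      intro h
      rw [hcc, ← ENNReal.ofReal_pow (norm_nonneg _),
        ← ENNReal.ofReal_mul (inv_nonneg.2 hγρ.le)]
      exact ENNReal.ofReal_le_ofReal (hb2 h)
    calc (∑' h : G, cc h ^ 2)
        ≤ ∑' h : G, ENNReal.ofReal (γ * ⟪k₀, nu d hd⟫)⁻¹ *
            ENNReal.ofReal (ρ h * ‖ψ (h : V d)‖ ^ 2) :=
          Summable.tsum_le_tsum hle ENNReal.summable ENNReal.summable
      _ = ENNReal.ofReal (γ * ⟪k₀, nu d hd⟫)⁻¹ *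
            ∑' h : G, ENNReal.ofReal (ρ h * ‖ψ (h : V d)‖ ^ 2) := ENNReal.tsum_mul_left
      _ = _ := by
          rw [hNdef, ENNReal.ofReal_tsum_of_nonneg
            (fun h => mul_nonneg (hρpos h).le (sq_nonneg _)) hψ]
  have main : (∑' g : G, ENNReal.ofReal (F g)) ≤
      ENNReal.ofReal ((π * CU * Sreal / (γ * ⟪k₀, nu d hd⟫)) ^ 2 * N) := by
    calc (∑' g : G, ENNReal.ofReal (F g))
        ≤ ∑' g : G, ENNReal.ofReal (π ^ 2 / (γ * ⟪k₀, nu d hd⟫)) * ((ENNReal.ofReal CU) ^ 2 *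
            (∑' h : G, K g h * cc h) ^ 2) :=
          Summable.tsum_le_tsum hofF ENNReal.summable ENNReal.summable
      _ = ENNReal.ofReal (π ^ 2 / (γ * ⟪k₀, nu d hd⟫)) * ((ENNReal.ofReal CU) ^ 2 *
            ∑' g : G, (∑' h : G, K g h * cc h) ^ 2) := by
          rw [ENNReal.tsum_mul_left, ENNReal.tsum_mul_left]
      _ ≤ ENNReal.ofReal (π ^ 2 / (γ * ⟪k₀, nu d hd⟫)) * ((ENNReal.ofReal CU) ^ 2 *
            (SS ^ 2 * (ENNReal.ofReal (γ * ⟪k₀, nu d hd⟫)⁻¹ * ENNReal.ofReal N))) := by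
          refine mul_le_mul' le_rfl (mul_le_mul' le_rfl (hschur.trans ?_))
          exact mul_le_mul' le_rfl hc2
      _ = ENNReal.ofReal ((π * CU * Sreal / (γ * ⟪k₀, nu d hd⟫)) ^ 2 * N) := by
          rw [hSS, ← ENNReal.ofReal_pow hCU.le, ← ENNReal.ofReal_pow hS0,
            ← ENNReal.ofReal_mul (inv_nonneg.2 hγρ.le),
            ← ENNReal.ofReal_mul (sq_nonneg Sreal),
            ← ENNReal.ofReal_mul (sq_nonneg CU),
            ← ENNReal.ofReal_mul (div_nonneg (sq_nonneg _) hγρ.le)]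
          congr 1
          field_simp
  have hF0 : ∀ g : G, 0 ≤ F g := fun g => by
    simp only [hFdef]
    exact mul_nonneg (hρpos g).le (sq_nonneg _)
  have hRHS0 : 0 ≤ (π * CU * Sreal / (γ * ⟪k₀, nu d hd⟫)) ^ 2 * N :=
    mul_nonneg (sq_nonneg _) hN0
  have hFsum : Summable F := by
    have hne : (∑' g : G, ENNReal.ofReal (F g)) ≠ ⊤ :=
      ne_top_of_le_ne_top ENNReal.ofReal_ne_top main
    have h4 : Summable (fun g : G => Real.toNNReal (F g)) :=
      ENNReal.tsum_coe_ne_top_iff_summable.1 hne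
    have h5 := NNReal.summable_coe.2 h4
    refine h5.congr (fun g => Real.coe_toNNReal _ (hF0 g))
  have hfin : ENNReal.ofReal (∑' g : G, F g) ≤
      ENNReal.ofReal ((π * CU * Sreal / (γ * ⟪k₀, nu d hd⟫)) ^ 2 * N) := by
    rw [ENNReal.ofReal_tsum_of_nonneg hF0 hFsum]
    exact main
  have := (ENNReal.ofReal_le_ofReal_iff hRHS0).1 hfin
  rw [hSm]
  exact this
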